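/- Suppose a sequence of complete balanced bipartite graphs with part sizes q_1, …, q_t is removed from an n-vertex graph, where each removal during 'phase ℓ' (when the current edge count lies in (n²/(ℓ+1), n²/ℓ]) satisfies q_i ≥ c·ln n / ln(ℓ+2) for a constant c > 0. Then Σ_i q_i = O(n²/ln n). -/

import Mathlib

open Finset

-- ∑_{k=1}^N log k ≥ N log N - N
lemma aux_fact (N : ℕ) :
    (N : ℝ) * Real.log N - N ≤ ∑ k ∈ Finset.Ioc 0 N, Real.log k := by
  induction N with
  | zero => simp
  | succ N ih =>
    rw [Finset.sum_Ioc_succ_top (Nat.zero_le _)]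
    rcases Nat.eq_zero_or_pos N with h | h
    · subst h; simp
    have hN : (0:ℝ) < N := by exact_mod_cast h
    have hlog : Real.log (N+1) - Real.log N ≤ 1 / N := by
      have h1 : Real.log (((N:ℝ)+1)/N) ≤ ((N:ℝ)+1)/N - 1 :=
        Real.log_le_sub_one_of_pos (by positivity)
      rw [Real.log_div (by positivity) (by positivity)] at h1
      have : ((N:ℝ)+1)/N - 1 = 1/N := by field_simp; ring
      linarith
    push_cast
    have hkey : (N:ℝ) * (Real.log (N+1) - Real.log N) ≤ 1 := by
      calc (N:ℝ) * (Real.log (N+1) - Real.log N) ≤ (N:ℝ) * (1/N) := by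
            apply mul_le_mul_of_nonneg_left hlog (le_of_lt hN)
        _ = 1 := by field_simp
    nlinarith [ih]

lemma aux_sum_log_div (N : ℕ) :
    ∑ k ∈ Finset.Ioc 0 N, Real.log ((N:ℝ)/k) ≤ N := by
  rcases Nat.eq_zero_or_pos N with h | h
  · subst h; simp
  have h1 : ∑ k ∈ Finset.Ioc 0 N, Real.log ((N:ℝ)/k)
      = ∑ k ∈ Finset.Ioc 0 N, (Real.log N - Real.log k) := by
    apply Finset.sum_congr rfl
    intro k hk
    obtain ⟨hk0, _⟩ := Finset.mem_Ioc.mp hk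
    rw [Real.log_div (by positivity) (by exact_mod_cast hk0.ne')]
  rw [h1, Finset.sum_sub_distrib, Finset.sum_const, Nat.card_Ioc, Nat.sub_zero, nsmul_eq_mul]
  have := aux_fact N
  linarith

set_option maxHeartbeats 2000000 in
theorem stmt16 :
    ∀ c : ℝ, 0 < c → ∃ C : ℝ, 0 < C ∧ ∀ n : ℕ, 3 ≤ n →
      ∀ (t : ℕ) (q : ℕ → ℕ) (m : ℕ → ℕ),
        m 0 ≤ n ^ 2 →
        (∀ i < t, q i ^ 2 ≤ m i ∧ m (i + 1) = m i - q i ^ 2) →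
        (∀ i < t, ∀ ℓ : ℕ, 1 ≤ ℓ →
          (n : ℝ) ^ 2 / (ℓ + 1) < (m i : ℝ) → (m i : ℝ) ≤ (n : ℝ) ^ 2 / ℓ →
          c * Real.log n / Real.log (ℓ + 2) ≤ (q i : ℝ)) →
        (∑ i ∈ Finset.range t, (q i : ℝ)) ≤ C * n ^ 2 / Real.log n := by
  intro c hc
  refine ⟨(Real.log 3 + 1) / c, by positivity, ?_⟩
  intro n hn t q m hm0 hstep hphase
  set N := n ^ 2 with hNdef
  have hn1 : (1:ℝ) < n := by exact_mod_cast (by omega : 1 < n)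
  have hNr : (N:ℝ) = (n:ℝ)^2 := by rw [hNdef]; push_cast; ring
  have hlogn : 0 < Real.log n := Real.log_pos hn1
  have hle : ∀ i, i ≤ t → m i ≤ N := by
    intro i
    induction i with
    | zero => intro _; exact hm0
    | succ i ih =>
      intro h
      have h2 := (hstep i (by omega)).2
      have := ih (by omega)
      omega
  set g : ℕ → ℝ := fun k => Real.log ((N:ℝ)/k + 2) with hgdef
  have hg0 : ∀ k, 0 ≤ g k := by
    intro k
    apply Real.log_nonneg
    have : (0:ℝ) ≤ (N:ℝ)/k := by positivity
    linarith
  set f : ℕ → ℝ := fun M => ∑ k ∈ Finset.Ioc 0 M, g k with hfdef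
  have hf0 : ∀ M, 0 ≤ f M := fun M => Finset.sum_nonneg (fun k _ => hg0 k)
  have hfmono : ∀ a b : ℕ, a ≤ b → f a ≤ f b := by
    intro a b hab
    apply Finset.sum_le_sum_of_subset_of_nonneg
    · exact Finset.Ioc_subset_Ioc le_rfl hab
    · exact fun k _ _ => hg0 k
  have key : ∀ i < t, c * Real.log n * q i ≤ f (m i) - f (m (i+1)) := by
    intro i hi
    obtain ⟨hq2, hm1⟩ := hstep i hi
    have hms : m (i+1) ≤ m i := by omega
    have hdiff : f (m i) - f (m (i+1)) = ∑ k ∈ Finset.Ioc (m (i+1)) (m i), g k := by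
      have := Finset.sum_Ioc_consecutive g (Nat.zero_le (m (i+1))) hms
      simp only [hfdef]
      linarith [this]
    rcases Nat.eq_zero_or_pos (q i) with hq0 | hq0
    · have hmeq : m (i+1) = m i := by simp [hq0] at hm1; omega
      rw [hdiff, hmeq, hq0]
      simp
    · have hmi : 1 ≤ m i := le_trans (by nlinarith) hq2
      have hmiN : m i ≤ N := hle i hi.le
      set L := N / m i with hL
      have hL1 : 1 ≤ L := (Nat.one_le_div_iff (by omega)).2 hmiN
      have hupN : L * m i ≤ N := Nat.div_mul_le_self N (m i)
      have hlowN : N < (L + 1) * m i := by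
        have := (Nat.div_lt_iff_lt_mul (show 0 < m i by omega)).1
          (show N / m i < L + 1 by omega)
        exact this
      have hLpos : (0:ℝ) < L := by exact_mod_cast hL1
      have hup : (m i : ℝ) ≤ (n:ℝ)^2 / L := by
        rw [le_div_iff₀ hLpos]
        have : ((L * m i : ℕ) : ℝ) ≤ ((N:ℕ):ℝ) := by exact_mod_cast hupN
        push_cast at this ⊢
        nlinarith [hNr]
      have hlow : (n:ℝ)^2 / (L + 1) < (m i : ℝ) := by
        rw [div_lt_iff₀ (by positivity)]
        have : ((N:ℕ):ℝ) < (((L+1) * m i : ℕ) : ℝ) := by exact_mod_cast hlowN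
        push_cast at this ⊢
        nlinarith [hNr]
      have hph := hphase i hi L hL1 hlow hup
      have hlogL : 0 < Real.log ((L:ℝ)+2) := by
        apply Real.log_pos
        have : (1:ℝ) ≤ (L:ℝ) := by exact_mod_cast hL1
        linarith
      have h1 : c * Real.log n ≤ (q i : ℝ) * Real.log ((L:ℝ)+2) := by
        rw [div_le_iff₀ hlogL] at hph
        linarith
      have hperk : ∀ k ∈ Finset.Ioc (m (i+1)) (m i), Real.log ((L:ℝ)+2) ≤ g k := by
        intro k hk
        obtain ⟨hk1, hk2⟩ := Finset.mem_Ioc.mp hk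
        have hkpos : 0 < k := by omega
        have hc1 : (L:ℝ) ≤ (N:ℝ)/(m i) := Nat.cast_div_le
        have hc2 : (N:ℝ)/(m i) ≤ (N:ℝ)/k := by
          apply div_le_div_of_nonneg_left (by positivity) (by exact_mod_cast hkpos)
          exact_mod_cast hk2
        apply Real.log_le_log (by positivity)
        linarith
      have hcard : (Finset.Ioc (m (i+1)) (m i)).card = q i ^ 2 := by
        rw [Nat.card_Ioc]; omega
      have hsumk : ((q i:ℝ)^2) * Real.log ((L:ℝ)+2)
          ≤ ∑ k ∈ Finset.Ioc (m (i+1)) (m i), g k := by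
        have := Finset.card_nsmul_le_sum (Finset.Ioc (m (i+1)) (m i)) g
          (Real.log ((L:ℝ)+2)) hperk
        rw [hcard, nsmul_eq_mul] at this
        push_cast at this
        linarith
      have hqpos : (0:ℝ) < q i := by exact_mod_cast hq0
      rw [hdiff]
      nlinarith [h1, hsumk]
  have hsum : c * Real.log n * (∑ i ∈ Finset.range t, (q i:ℝ)) ≤ f (m 0) - f (m t) := by
    rw [Finset.mul_sum, ← Finset.sum_range_sub' (fun i => f (m i)) t]
    exact Finset.sum_le_sum (fun i hi => key i (Finset.mem_range.mp hi))
  have hfN : f N ≤ (Real.log 3 + 1) * N := by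
    have hN1 : 1 ≤ N := by simp only [hNdef]; nlinarith [hn]
    have h1 : f N ≤ ∑ k ∈ Finset.Ioc 0 N, (Real.log 3 + Real.log ((N:ℝ)/k)) := by
      apply Finset.sum_le_sum
      intro k hk
      obtain ⟨hk0, hkN⟩ := Finset.mem_Ioc.mp hk
      have hk0' : (0:ℝ) < k := by exact_mod_cast hk0
      have h1k : (1:ℝ) ≤ (N:ℝ)/k := by
        rw [le_div_iff₀ hk0']
        have : (k:ℝ) ≤ N := by exact_mod_cast hkN
        linarith
      rw [← Real.log_mul (by norm_num) (by positivity)]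
      apply Real.log_le_log (by positivity)
      linarith
    rw [Finset.sum_add_distrib, Finset.sum_const, Nat.card_Ioc, Nat.sub_zero, nsmul_eq_mul] at h1
    have h2 := aux_sum_log_div N
    linarith
  have hchain : c * Real.log n * (∑ i ∈ Finset.range t, (q i:ℝ))
      ≤ (Real.log 3 + 1) * (n:ℝ)^2 := by
    have h1 : f (m 0) ≤ f N := hfmono _ _ hm0
    rw [← hNr]
    linarith [hf0 (m t)]
  have hpos : 0 < c * Real.log n := by positivity
  calc (∑ i ∈ Finset.range t, (q i:ℝ))
      ≤ ((Real.log 3 + 1) * (n:ℝ)^2) / (c * Real.log n) := by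
        rw [le_div_iff₀ hpos]
        nlinarith [hchain]
    _ = (Real.log 3 + 1) / c * (n:ℝ)^2 / Real.log n := by
        field_simp
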